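/- Let f_Θ be an M-layer ReLU feed-forward network whose weight matrices W_1, ..., W_M each have spectral norm at most κ, and suppose the input satisfies ||x||_2 ≤ B. Then the change in network output under perturbations U_1, ..., U_M of the weights satisfies ||f_{Θ+U}(x) − f_Θ(x)||_2 ≤ e B κ^{M−1} Σ_{m=1}^{M} ||U_m||_2, provided ||U_m||_2 ≤ κ/M for all m. -/

import Mathlib

open scoped Matrix.Norms.L2Operator

/-- Coordinatewise ReLU on `ℝ^h`. -/
noncomputable def relu {h : ℕ} (v : EuclideanSpace ℝ (Fin h)) : EuclideanSpace ℝ (Fin h) :=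
  WithLp.toLp 2 (fun i => max (v i) 0)

/-- Apply the hidden layers `x ↦ φ(⋯φ(φ(x W₁) W₂)⋯)` given by a list of weight matrices. -/
noncomputable def hiddenLayers {h : ℕ} :
    List (Matrix (Fin h) (Fin h) ℝ) → EuclideanSpace ℝ (Fin h) → EuclideanSpace ℝ (Fin h)
  | [], x => x
  | W :: Ws, x => hiddenLayers Ws (relu (WithLp.toLp 2 (fun i => Matrix.vecMul (fun j => x j) W i)))

/-- An `(L+1)`-layer ReLU feed-forward network
`f_Θ(x) = φ(⋯φ(φ(x W₁) W₂)⋯ W_L) W_{L+1}` (no activation on the output layer). -/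
noncomputable def net {h L : ℕ} (W : Fin (L + 1) → Matrix (Fin h) (Fin h) ℝ)
    (x : EuclideanSpace ℝ (Fin h)) : EuclideanSpace ℝ (Fin h) :=
  WithLp.toLp 2 (fun i =>
    Matrix.vecMul
      (fun j => hiddenLayers (List.ofFn fun m : Fin L => W m.castSucc) x j)
      (W (Fin.last L)) i)

/-! ### Auxiliary definitions and lemmas -/

/-- `x ↦ x W` as a map of Euclidean spaces. -/
noncomputable def vecMulE {h : ℕ} (x : EuclideanSpace ℝ (Fin h))
    (W : Matrix (Fin h) (Fin h) ℝ) : EuclideanSpace ℝ (Fin h) :=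
  WithLp.toLp 2 (fun i => Matrix.vecMul (fun j => x j) W i)

lemma hiddenLayers_cons {h : ℕ} (W : Matrix (Fin h) (Fin h) ℝ)
    (Ws : List (Matrix (Fin h) (Fin h) ℝ)) (x : EuclideanSpace ℝ (Fin h)) :
    hiddenLayers (W :: Ws) x = hiddenLayers Ws (relu (vecMulE x W)) := rfl

lemma vecMulE_norm_le {h : ℕ} (x : EuclideanSpace ℝ (Fin h)) (W : Matrix (Fin h) (Fin h) ℝ) :
    ‖vecMulE x W‖ ≤ ‖W‖ * ‖x‖ := by
  have h1 : vecMulE x W =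
      (EuclideanSpace.equiv (Fin h) ℝ).symm (W.transpose.mulVec (fun j => x j)) := by
    ext i
    simp [vecMulE, Matrix.mulVec_transpose]
  have h2 : ‖W.transpose‖ = ‖W‖ := by
    have := Matrix.l2_opNorm_conjTranspose W
    have h3 : W.transpose.map star = W.transpose := by
      ext i j; simp
    rwa [Matrix.conjTranspose, h3] at this
  rw [h1, ← h2]
  exact Matrix.l2_opNorm_mulVec W.transpose x

lemma vecMulE_add_right {h : ℕ} (x : EuclideanSpace ℝ (Fin h))
    (A B : Matrix (Fin h) (Fin h) ℝ) :
    vecMulE x (A + B) = vecMulE x A + vecMulE x B := by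
  ext i
  simp [vecMulE, Matrix.vecMul_add]

lemma vecMulE_sub_left {h : ℕ} (x y : EuclideanSpace ℝ (Fin h))
    (A : Matrix (Fin h) (Fin h) ℝ) :
    vecMulE (x - y) A = vecMulE x A - vecMulE y A := by
  ext i
  have : (fun j => (x - y) j) = (fun j => x j) - (fun j => y j) := by
    funext j; simp
  simp only [vecMulE, this, Matrix.sub_vecMul]
  rfl

lemma relu_sub_norm_le {h : ℕ} (v w : EuclideanSpace ℝ (Fin h)) :
    ‖relu v - relu w‖ ≤ ‖v - w‖ := by
  rw [EuclideanSpace.norm_eq, EuclideanSpace.norm_eq]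
  apply Real.sqrt_le_sqrt
  apply Finset.sum_le_sum
  intro i _
  have h1 : (relu v - relu w) i = max (v i) 0 - max (w i) 0 := by
    rfl
  have h2 : (v - w) i = v i - w i := by simp
  rw [h1, h2, Real.norm_eq_abs, Real.norm_eq_abs]
  exact pow_le_pow_left₀ (abs_nonneg _) (abs_max_sub_max_le_abs _ _ _) 2

lemma relu_norm_le {h : ℕ} (v : EuclideanSpace ℝ (Fin h)) : ‖relu v‖ ≤ ‖v‖ := by
  have h0 : relu (0 : EuclideanSpace ℝ (Fin h)) = 0 := by
    ext i; simp [relu]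
  have := relu_sub_norm_le v 0
  rwa [h0, sub_zero, sub_zero] at this

lemma hidden_norm_le {h : ℕ} (κ : ℝ) (hκ : 0 ≤ κ) (Ws : List (Matrix (Fin h) (Fin h) ℝ))
    (hWs : ∀ W ∈ Ws, ‖W‖ ≤ κ) (x : EuclideanSpace ℝ (Fin h)) :
    ‖hiddenLayers Ws x‖ ≤ κ ^ Ws.length * ‖x‖ := by
  induction Ws generalizing x with
  | nil => simp [hiddenLayers]
  | cons W Ws ih =>
    rw [hiddenLayers_cons]
    calc ‖hiddenLayers Ws (relu (vecMulE x W))‖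
        ≤ κ ^ Ws.length * ‖relu (vecMulE x W)‖ :=
          ih (fun A hA => hWs A (List.mem_cons_of_mem _ hA)) _
      _ ≤ κ ^ Ws.length * (κ * ‖x‖) := by
          apply mul_le_mul_of_nonneg_left _ (pow_nonneg hκ _)
          calc ‖relu (vecMulE x W)‖ ≤ ‖vecMulE x W‖ := relu_norm_le _
            _ ≤ ‖W‖ * ‖x‖ := vecMulE_norm_le _ _
            _ ≤ κ * ‖x‖ := by
                apply mul_le_mul_of_nonneg_right (hWs W (List.mem_cons_self)) (norm_nonneg _)
      _ = κ ^ (W :: Ws).length * ‖x‖ := by simp only [List.length_cons, pow_succ]; ring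

lemma hidden_lip {h : ℕ} (κ : ℝ) (hκ : 0 ≤ κ) (Ws : List (Matrix (Fin h) (Fin h) ℝ))
    (hWs : ∀ W ∈ Ws, ‖W‖ ≤ κ) (x y : EuclideanSpace ℝ (Fin h)) :
    ‖hiddenLayers Ws x - hiddenLayers Ws y‖ ≤ κ ^ Ws.length * ‖x - y‖ := by
  induction Ws generalizing x y with
  | nil => simp [hiddenLayers]
  | cons W Ws ih =>
    rw [hiddenLayers_cons, hiddenLayers_cons]
    calc ‖hiddenLayers Ws (relu (vecMulE x W)) - hiddenLayers Ws (relu (vecMulE y W))‖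
        ≤ κ ^ Ws.length * ‖relu (vecMulE x W) - relu (vecMulE y W)‖ :=
          ih (fun A hA => hWs A (List.mem_cons_of_mem _ hA)) _ _
      _ ≤ κ ^ Ws.length * (κ * ‖x - y‖) := by
          apply mul_le_mul_of_nonneg_left _ (pow_nonneg hκ _)
          calc ‖relu (vecMulE x W) - relu (vecMulE y W)‖
              ≤ ‖vecMulE x W - vecMulE y W‖ := relu_sub_norm_le _ _
            _ = ‖vecMulE (x - y) W‖ := by rw [vecMulE_sub_left]
            _ ≤ ‖W‖ * ‖x - y‖ := vecMulE_norm_le _ _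
            _ ≤ κ * ‖x - y‖ :=
                mul_le_mul_of_nonneg_right (hWs W (List.mem_cons_self)) (norm_nonneg _)
      _ = κ ^ (W :: Ws).length * ‖x - y‖ := by simp only [List.length_cons, pow_succ]; ring

lemma hidden_pert {h : ℕ} (κ δ : ℝ) (hκ : 0 ≤ κ) (hδ : 0 ≤ δ)
    (l : List (Matrix (Fin h) (Fin h) ℝ × Matrix (Fin h) (Fin h) ℝ))
    (hl : ∀ p ∈ l, ‖p.1‖ ≤ κ ∧ ‖p.2‖ ≤ δ * κ) (x : EuclideanSpace ℝ (Fin h)) :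
    κ * ‖hiddenLayers (l.map fun p => p.1 + p.2) x - hiddenLayers (l.map Prod.fst) x‖ ≤
      (1 + δ) ^ l.length * κ ^ l.length * ‖x‖ * (l.map fun p => ‖p.2‖).sum := by
  induction l generalizing x with
  | nil => simp [hiddenLayers]
  | cons p l ih =>
    obtain ⟨Wm, Um⟩ := p
    have hWm : ‖Wm‖ ≤ κ := (hl (Wm, Um) (List.mem_cons_self)).1
    have hUm : ‖Um‖ ≤ δ * κ := (hl (Wm, Um) (List.mem_cons_self)).2
    have hl' : ∀ p ∈ l, ‖p.1‖ ≤ κ ∧ ‖p.2‖ ≤ δ * κ :=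
      fun p hp => hl p (List.mem_cons_of_mem _ hp)
    have hfst : ∀ A ∈ l.map Prod.fst, ‖A‖ ≤ κ := by
      intro A hA
      obtain ⟨p, hp, rfl⟩ := List.mem_map.1 hA
      exact (hl' p hp).1
    set x₁ := relu (vecMulE x (Wm + Um)) with hx₁
    set x₂ := relu (vecMulE x Wm) with hx₂
    have hx₁norm : ‖x₁‖ ≤ (1 + δ) * κ * ‖x‖ := by
      calc ‖x₁‖ ≤ ‖vecMulE x (Wm + Um)‖ := relu_norm_le _
        _ ≤ ‖Wm + Um‖ * ‖x‖ := vecMulE_norm_le _ _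
        _ ≤ (κ + δ * κ) * ‖x‖ := by
            apply mul_le_mul_of_nonneg_right _ (norm_nonneg _)
            calc ‖Wm + Um‖ ≤ ‖Wm‖ + ‖Um‖ := norm_add_le _ _
              _ ≤ κ + δ * κ := add_le_add hWm hUm
        _ = (1 + δ) * κ * ‖x‖ := by ring
    have hx₁₂ : ‖x₁ - x₂‖ ≤ ‖Um‖ * ‖x‖ := by
      calc ‖x₁ - x₂‖ ≤ ‖vecMulE x (Wm + Um) - vecMulE x Wm‖ := relu_sub_norm_le _ _
        _ = ‖vecMulE x Um‖ := by rw [vecMulE_add_right]; congr 1; abel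
        _ ≤ ‖Um‖ * ‖x‖ := vecMulE_norm_le _ _
    have hsplit : ‖hiddenLayers (((Wm, Um) :: l).map fun p => p.1 + p.2) x -
        hiddenLayers (((Wm, Um) :: l).map Prod.fst) x‖ ≤
        ‖hiddenLayers (l.map fun p => p.1 + p.2) x₁ - hiddenLayers (l.map Prod.fst) x₁‖ +
        ‖hiddenLayers (l.map Prod.fst) x₁ - hiddenLayers (l.map Prod.fst) x₂‖ := by
      simp only [List.map_cons, hiddenLayers_cons]
      exact norm_sub_le_norm_sub_add_norm_sub _ _ _
    have hterm2 : κ * ‖hiddenLayers (l.map Prod.fst) x₁ - hiddenLayers (l.map Prod.fst) x₂‖ ≤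
        κ ^ (l.length + 1) * (‖Um‖ * ‖x‖) := by
      calc κ * ‖hiddenLayers (l.map Prod.fst) x₁ - hiddenLayers (l.map Prod.fst) x₂‖
          ≤ κ * (κ ^ (l.map Prod.fst).length * ‖x₁ - x₂‖) :=
            mul_le_mul_of_nonneg_left (hidden_lip κ hκ _ hfst _ _) hκ
        _ ≤ κ * (κ ^ l.length * (‖Um‖ * ‖x‖)) := by
            rw [List.length_map]
            exact mul_le_mul_of_nonneg_left
              (mul_le_mul_of_nonneg_left hx₁₂ (pow_nonneg hκ _)) hκ
        _ = κ ^ (l.length + 1) * (‖Um‖ * ‖x‖) := by rw [pow_succ]; ring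
    have hterm1 : κ * ‖hiddenLayers (l.map fun p => p.1 + p.2) x₁ -
        hiddenLayers (l.map Prod.fst) x₁‖ ≤
        (1 + δ) ^ (l.length + 1) * κ ^ (l.length + 1) * ‖x‖ * (l.map fun p => ‖p.2‖).sum := by
      calc κ * ‖hiddenLayers (l.map fun p => p.1 + p.2) x₁ - hiddenLayers (l.map Prod.fst) x₁‖
          ≤ (1 + δ) ^ l.length * κ ^ l.length * ‖x₁‖ * (l.map fun p => ‖p.2‖).sum := ih hl' _
        _ ≤ (1 + δ) ^ l.length * κ ^ l.length * ((1 + δ) * κ * ‖x‖) *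
              (l.map fun p => ‖p.2‖).sum := by
            apply mul_le_mul_of_nonneg_right _ ?_
            · apply mul_le_mul_of_nonneg_left hx₁norm
              positivity
            · apply List.sum_nonneg
              intro a ha
              obtain ⟨p, hp, rfl⟩ := List.mem_map.1 ha
              exact norm_nonneg _
        _ = (1 + δ) ^ (l.length + 1) * κ ^ (l.length + 1) * ‖x‖ *
              (l.map fun p => ‖p.2‖).sum := by rw [pow_succ, pow_succ]; ring
    have hSnn : (0:ℝ) ≤ (l.map fun p => ‖p.2‖).sum := by
      apply List.sum_nonneg
      intro a ha
      obtain ⟨p, hp, rfl⟩ := List.mem_map.1 ha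
      exact norm_nonneg _
    have hone : (1:ℝ) ≤ (1 + δ) ^ (l.length + 1) := one_le_pow₀ (by linarith)
    calc κ * ‖hiddenLayers (((Wm, Um) :: l).map fun p => p.1 + p.2) x -
          hiddenLayers (((Wm, Um) :: l).map Prod.fst) x‖
        ≤ κ * (‖hiddenLayers (l.map fun p => p.1 + p.2) x₁ - hiddenLayers (l.map Prod.fst) x₁‖ +
            ‖hiddenLayers (l.map Prod.fst) x₁ - hiddenLayers (l.map Prod.fst) x₂‖) :=
          mul_le_mul_of_nonneg_left hsplit hκ
      _ = κ * ‖hiddenLayers (l.map fun p => p.1 + p.2) x₁ - hiddenLayers (l.map Prod.fst) x₁‖ +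
            κ * ‖hiddenLayers (l.map Prod.fst) x₁ - hiddenLayers (l.map Prod.fst) x₂‖ := by ring
      _ ≤ (1 + δ) ^ (l.length + 1) * κ ^ (l.length + 1) * ‖x‖ * (l.map fun p => ‖p.2‖).sum +
            κ ^ (l.length + 1) * (‖Um‖ * ‖x‖) := add_le_add hterm1 hterm2
      _ ≤ (1 + δ) ^ (l.length + 1) * κ ^ (l.length + 1) * ‖x‖ * (l.map fun p => ‖p.2‖).sum +
            (1 + δ) ^ (l.length + 1) * (κ ^ (l.length + 1) * (‖Um‖ * ‖x‖)) := by
          have : κ ^ (l.length + 1) * (‖Um‖ * ‖x‖) ≤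
              (1 + δ) ^ (l.length + 1) * (κ ^ (l.length + 1) * (‖Um‖ * ‖x‖)) := by
            nth_rewrite 1 [← one_mul (κ ^ (l.length + 1) * (‖Um‖ * ‖x‖))]
            apply mul_le_mul_of_nonneg_right hone
            positivity
          linarith
      _ = (1 + δ) ^ ((Wm, Um) :: l).length * κ ^ ((Wm, Um) :: l).length * ‖x‖ *
            (((Wm, Um) :: l).map fun p => ‖p.2‖).sum := by
          simp only [List.length_cons, List.map_cons, List.sum_cons]
          ring

theorem stmt15 (h L : ℕ) (κ B : ℝ)
    (W U : Fin (L + 1) → Matrix (Fin h) (Fin h) ℝ)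
    (hW : ∀ m, ‖W m‖ ≤ κ)
    (hU : ∀ m, ‖U m‖ ≤ κ / (L + 1))
    (x : EuclideanSpace ℝ (Fin h)) (hx : ‖x‖ ≤ B) :
    ‖net (fun m => W m + U m) x - net W x‖ ≤
      Real.exp 1 * B * κ ^ L * ∑ m, ‖U m‖ := by
  have hκ : (0:ℝ) ≤ κ := le_trans (norm_nonneg _) (hW 0)
  have hB : (0:ℝ) ≤ B := le_trans (norm_nonneg _) hx
  set δ : ℝ := ((L:ℝ) + 1)⁻¹ with hδdef
  have hδ : (0:ℝ) ≤ δ := by positivity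
  have hδκ : ∀ m, ‖U m‖ ≤ δ * κ := by
    intro m
    calc ‖U m‖ ≤ κ / (L + 1) := hU m
      _ = δ * κ := by rw [hδdef, div_eq_inv_mul]
  -- the exp bound
  have hexp : (1 + δ) ^ (L + 1) ≤ Real.exp 1 := by
    have h1 : (1 + δ) ≤ Real.exp δ := by
      have := Real.add_one_le_exp δ
      linarith
    calc (1 + δ) ^ (L + 1) ≤ (Real.exp δ) ^ (L + 1) :=
          pow_le_pow_left₀ (by linarith) h1 _
      _ = Real.exp (((L:ℝ) + 1) * δ) := by
          rw [← Real.exp_nat_mul]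
          norm_num
      _ = Real.exp 1 := by
          rw [hδdef, mul_inv_cancel₀ (by positivity)]
  have hexp1 : (1:ℝ) ≤ Real.exp 1 := by
    have := Real.add_one_le_exp (1:ℝ)
    linarith
  set l : List (Matrix (Fin h) (Fin h) ℝ × Matrix (Fin h) (Fin h) ℝ) :=
    List.ofFn (fun m : Fin L => (W m.castSucc, U m.castSucc)) with hl
  have hlen : l.length = L := by simp [hl]
  have hmap1 : l.map (fun p => p.1 + p.2) =
      List.ofFn (fun m : Fin L => W m.castSucc + U m.castSucc) := by
    rw [hl, List.map_ofFn]; rfl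
  have hmap2 : l.map Prod.fst = List.ofFn (fun m : Fin L => W m.castSucc) := by
    rw [hl, List.map_ofFn]; rfl
  have hsum : (l.map fun p => ‖p.2‖).sum = ∑ m : Fin L, ‖U m.castSucc‖ := by
    rw [hl, List.map_ofFn, List.sum_ofFn]; rfl
  have hlmem : ∀ p ∈ l, ‖p.1‖ ≤ κ ∧ ‖p.2‖ ≤ δ * κ := by
    intro p hp
    rw [hl, List.mem_ofFn] at hp
    obtain ⟨m, rfl⟩ := hp
    exact ⟨hW _, hδκ _⟩
  set y' : EuclideanSpace ℝ (Fin h) :=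
    hiddenLayers (List.ofFn fun m : Fin L => W m.castSucc + U m.castSucc) x with hy'
  set y : EuclideanSpace ℝ (Fin h) :=
    hiddenLayers (List.ofFn fun m : Fin L => W m.castSucc) x with hy
  have hpert : κ * ‖y' - y‖ ≤ (1 + δ) ^ L * κ ^ L * ‖x‖ * ∑ m : Fin L, ‖U m.castSucc‖ := by
    have := hidden_pert κ δ hκ hδ l hlmem x
    rw [hmap1, hmap2, hlen, hsum] at this
    exact this
  have hynorm : ‖y‖ ≤ κ ^ L * B := by
    have h1 : ∀ A ∈ List.ofFn (fun m : Fin L => W m.castSucc), ‖A‖ ≤ κ := by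
      intro A hA
      rw [List.mem_ofFn] at hA
      obtain ⟨m, rfl⟩ := hA
      exact hW _
    calc ‖y‖ ≤ κ ^ (List.ofFn fun m : Fin L => W m.castSucc).length * ‖x‖ :=
          hidden_norm_le κ hκ _ h1 x
      _ ≤ κ ^ L * B := by
          rw [List.length_ofFn]
          exact mul_le_mul_of_nonneg_left hx (pow_nonneg hκ _)
  -- decompose the output difference
  have hWL : Fin.last L = (Fin.last L : Fin (L + 1)) := rfl
  have hnet1 : net (fun m => W m + U m) x = vecMulE y' (W (Fin.last L) + U (Fin.last L)) := rfl
  have hnet2 : net W x = vecMulE y (W (Fin.last L)) := rfl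
  have hdecomp : net (fun m => W m + U m) x - net W x =
      vecMulE (y' - y) (W (Fin.last L) + U (Fin.last L)) + vecMulE y (U (Fin.last L)) := by
    rw [hnet1, hnet2]
    simp only [vecMulE_sub_left, vecMulE_add_right]
    abel
  have hSnn : (0:ℝ) ≤ ∑ m : Fin L, ‖U m.castSucc‖ :=
    Finset.sum_nonneg fun _ _ => norm_nonneg _
  have hterm1 : ‖vecMulE (y' - y) (W (Fin.last L) + U (Fin.last L))‖ ≤
      Real.exp 1 * B * κ ^ L * ∑ m : Fin L, ‖U m.castSucc‖ := by
    calc ‖vecMulE (y' - y) (W (Fin.last L) + U (Fin.last L))‖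
        ≤ ‖W (Fin.last L) + U (Fin.last L)‖ * ‖y' - y‖ := vecMulE_norm_le _ _
      _ ≤ ((1 + δ) * κ) * ‖y' - y‖ := by
          apply mul_le_mul_of_nonneg_right _ (norm_nonneg _)
          calc ‖W (Fin.last L) + U (Fin.last L)‖ ≤ ‖W (Fin.last L)‖ + ‖U (Fin.last L)‖ :=
                norm_add_le _ _
            _ ≤ κ + δ * κ := add_le_add (hW _) (hδκ _)
            _ = (1 + δ) * κ := by ring
      _ = (1 + δ) * (κ * ‖y' - y‖) := by ring
      _ ≤ (1 + δ) * ((1 + δ) ^ L * κ ^ L * ‖x‖ * ∑ m : Fin L, ‖U m.castSucc‖) :=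
          mul_le_mul_of_nonneg_left hpert (by linarith)
      _ = (1 + δ) ^ (L + 1) * κ ^ L * ‖x‖ * ∑ m : Fin L, ‖U m.castSucc‖ := by
          rw [pow_succ]; ring
      _ ≤ Real.exp 1 * κ ^ L * B * ∑ m : Fin L, ‖U m.castSucc‖ := by
          apply mul_le_mul_of_nonneg_right _ hSnn
          calc (1 + δ) ^ (L + 1) * κ ^ L * ‖x‖ ≤ (1 + δ) ^ (L + 1) * κ ^ L * B := by
                apply mul_le_mul_of_nonneg_left hx
                positivity
            _ ≤ Real.exp 1 * κ ^ L * B := by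
                apply mul_le_mul_of_nonneg_right _ hB
                exact mul_le_mul_of_nonneg_right hexp (pow_nonneg hκ _)
      _ = Real.exp 1 * B * κ ^ L * ∑ m : Fin L, ‖U m.castSucc‖ := by ring
  have hterm2 : ‖vecMulE y (U (Fin.last L))‖ ≤
      Real.exp 1 * B * κ ^ L * ‖U (Fin.last L)‖ := by
    calc ‖vecMulE y (U (Fin.last L))‖ ≤ ‖U (Fin.last L)‖ * ‖y‖ := vecMulE_norm_le _ _
      _ ≤ ‖U (Fin.last L)‖ * (κ ^ L * B) :=
          mul_le_mul_of_nonneg_left hynorm (norm_nonneg _)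
      _ ≤ Real.exp 1 * B * κ ^ L * ‖U (Fin.last L)‖ := by
          nth_rewrite 1 [← one_mul (‖U (Fin.last L)‖ * (κ ^ L * B))]
          have h1 : (1:ℝ) * (‖U (Fin.last L)‖ * (κ ^ L * B)) ≤
              Real.exp 1 * (‖U (Fin.last L)‖ * (κ ^ L * B)) := by
            apply mul_le_mul_of_nonneg_right hexp1
            positivity
          calc (1:ℝ) * (‖U (Fin.last L)‖ * (κ ^ L * B)) ≤
                Real.exp 1 * (‖U (Fin.last L)‖ * (κ ^ L * B)) := h1
            _ = Real.exp 1 * B * κ ^ L * ‖U (Fin.last L)‖ := by ring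
  calc ‖net (fun m => W m + U m) x - net W x‖
      = ‖vecMulE (y' - y) (W (Fin.last L) + U (Fin.last L)) + vecMulE y (U (Fin.last L))‖ := by
        rw [hdecomp]
    _ ≤ ‖vecMulE (y' - y) (W (Fin.last L) + U (Fin.last L))‖ +
        ‖vecMulE y (U (Fin.last L))‖ := norm_add_le _ _
    _ ≤ Real.exp 1 * B * κ ^ L * (∑ m : Fin L, ‖U m.castSucc‖) +
        Real.exp 1 * B * κ ^ L * ‖U (Fin.last L)‖ := add_le_add hterm1 hterm2
    _ = Real.exp 1 * B * κ ^ L * ((∑ m : Fin L, ‖U m.castSucc‖) + ‖U (Fin.last L)‖) := by ring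
    _ = Real.exp 1 * B * κ ^ L * ∑ m, ‖U m‖ := by
        rw [Fin.sum_univ_castSucc]
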